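/- Let X = ℕ, Y = ℕ, and H = { h_a : a ∈ ℕ } where h_a(x) = a for all x. Then L(H) = 1, SG(H) = 1, and BL(H) = ∞. -/

import Mathlib

open scoped Classical

variable {X : Type*} {Y : Type*}

/-- `H` shatters the Bandit Littlestone tree `Tr` (nodes indexed by label prefixes)
to depth `d`: for every label path some hypothesis avoids every label on the path. -/
def BLShattered (H : Set (X → Y)) (d : ℕ) (Tr : List Y → X) : Prop :=
  ∀ y : Fin d → Y, ∃ h ∈ H, ∀ t : Fin d, h (Tr ((List.ofFn y).take t.1)) ≠ y t

/-- `H` shatters some Bandit Littlestone tree of depth `d`. -/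
def BLShatteredDepth (H : Set (X → Y)) (d : ℕ) : Prop :=
  ∃ Tr : List Y → X, BLShattered H d Tr

/-- The Bandit Littlestone dimension of `H`, as an extended natural number. -/
noncomputable def BLdim (H : Set (X → Y)) : ℕ∞ :=
  ⨆ d ∈ {d : ℕ | BLShatteredDepth H d}, (d : ℕ∞)

/-- `H` shatters the (multiclass) Littlestone tree with nodes `Tr` and edge labels `e`
to depth `d`: edge labels at each internal node are distinct, and every binary path is
realized by some hypothesis agreeing with the edge labels. -/
def LShattered (H : Set (X → Y)) (d : ℕ) (Tr : List Bool → X)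
    (e : List Bool → Bool → Y) : Prop :=
  (∀ p : List Bool, p.length < d → e p false ≠ e p true) ∧
  ∀ σ : Fin d → Bool, ∃ h ∈ H, ∀ t : Fin d,
    h (Tr ((List.ofFn σ).take t.1)) = e ((List.ofFn σ).take t.1) (σ t)

/-- `H` shatters some Littlestone tree of depth `d`. -/
def LShatteredDepth (H : Set (X → Y)) (d : ℕ) : Prop :=
  ∃ Tr e, LShattered H d Tr e

/-- The multiclass Littlestone dimension of `H`, as an extended natural number. -/
noncomputable def Ldim (H : Set (X → Y)) : ℕ∞ :=
  ⨆ d ∈ {d : ℕ | LShatteredDepth H d}, (d : ℕ∞)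

/-- The 0-1 loss class of `H`, as a class of `Prop`-valued functions on `X × Y`. -/
def lossClass (H : Set (X → Y)) : Set (X × Y → Prop) :=
  {f | ∃ h ∈ H, f = fun p => h p.1 ≠ p.2}

/-- The Sequential Graph dimension: the Littlestone dimension of the loss class. -/
noncomputable def SGdim (H : Set (X → Y)) : ℕ∞ := Ldim (lossClass H)

/-- The projection `H(x) = {h x : h ∈ H}`. -/
def proj (H : Set (X → Y)) (x : X) : Set Y := {y | ∃ h ∈ H, h x = y}

-- auxiliary lemmas

lemma take_one_ofFn {n : ℕ} {α : Type*} (σ : Fin (n + 2) → α) :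
    (List.ofFn σ).take 1 = [σ 0] := by
  simp [List.ofFn_succ]

lemma stmt6_aux1 {d : ℕ} (hd : LShatteredDepth {f : ℕ → ℕ | ∃ a : ℕ, f = fun _ => a} d) :
    d ≤ 1 := by
  by_contra hlt
  obtain ⟨n, rfl⟩ : ∃ n, d = n + 2 := ⟨d - 2, by omega⟩
  obtain ⟨Tr, e, hdist, hreal⟩ := hd
  have key : ∀ b : Bool, ∃ a : ℕ, a = e [] false ∧ a = e [false] b := by
    intro b
    obtain ⟨h, ⟨a, rfl⟩, hpath⟩ := hreal (fun t => if t.1 = 1 then b else false)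
    refine ⟨a, ?_, ?_⟩
    · have := hpath ⟨0, by omega⟩
      simpa using this
    · have := hpath ⟨1, by omega⟩
      simpa [take_one_ofFn] using this
  obtain ⟨a, ha1, ha2⟩ := key false
  obtain ⟨a', hb1, hb2⟩ := key true
  exact hdist [false] (by simp) (by rw [← ha2, ← hb2, ha1, hb1])

lemma stmt6_aux2 {d : ℕ}
    (hd : LShatteredDepth (lossClass {f : ℕ → ℕ | ∃ a : ℕ, f = fun _ => a}) d) :
    d ≤ 1 := by
  by_contra hlt
  obtain ⟨n, rfl⟩ : ∃ n, d = n + 2 := ⟨d - 2, by omega⟩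
  obtain ⟨Tr, e, hdist, hreal⟩ := hd
  -- one of the root labels is a false proposition
  obtain ⟨c, hc⟩ : ∃ c : Bool, ¬ e [] c := by
    by_contra h
    push_neg at h
    exact hdist [] (by simp) (propext (iff_of_true (h false) (h true)))
  have key : ∀ b : Bool, ((Tr []).2 ≠ (Tr [c]).2) = e [c] b := by
    intro b
    obtain ⟨h, ⟨g, ⟨a, rfl⟩, rfl⟩, hpath⟩ :=
      hreal (fun t => if t.1 = 0 then c else if t.1 = 1 then b else c)
    have h0 := hpath ⟨0, by omega⟩
    norm_num at h0
    have ha : a = (Tr []).2 := by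
      by_contra hne
      have : e [] c := by
        rw [← h0]; exact hne
      exact hc this
    have h1 := hpath ⟨1, by omega⟩
    rw [take_one_ofFn] at h1
    simpa [ha] using h1
  exact hdist [c] (by simp) (by rw [← key false, ← key true])

lemma stmt6_L : Ldim {f : ℕ → ℕ | ∃ a : ℕ, f = fun _ => a} = 1 := by
  apply le_antisymm
  · refine iSup₂_le fun d hd => ?_
    exact_mod_cast stmt6_aux1 hd
  · refine le_trans (le_of_eq ?_) (le_iSup₂ (1 : ℕ) ?_)
    · norm_num
    · refine ⟨fun _ => 0, fun _ b => if b then 1 else 0, fun p _ => by simp, fun σ => ?_⟩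
      refine ⟨fun _ => if σ 0 then 1 else 0, ⟨_, rfl⟩, fun t => ?_⟩
      have : t = 0 := Subsingleton.elim _ _
      subst this
      simp

lemma stmt6_SG : SGdim {f : ℕ → ℕ | ∃ a : ℕ, f = fun _ => a} = 1 := by
  apply le_antisymm
  · refine iSup₂_le fun d hd => ?_
    exact_mod_cast stmt6_aux2 hd
  · refine le_trans (le_of_eq ?_) (le_iSup₂ (1 : ℕ) ?_)
    · norm_num
    · refine ⟨fun _ => (0, 0), fun _ b => ((if b then 1 else 0 : ℕ) ≠ 0), fun p _ => ?_,
        fun σ => ?_⟩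
      · simp only [if_true, if_false]
        intro h
        have : (1 : ℕ) ≠ 0 := one_ne_zero
        rw [← h] at this
        exact this rfl
      · refine ⟨fun p => (if σ 0 then 1 else 0 : ℕ) ≠ p.2,
          ⟨fun _ => if σ 0 then 1 else 0, ⟨_, rfl⟩, rfl⟩, fun t => ?_⟩
        have : t = 0 := Subsingleton.elim _ _
        subst this
        simp

lemma stmt6_BL : BLdim {f : ℕ → ℕ | ∃ a : ℕ, f = fun _ => a} = ⊤ := by
  refine WithTop.eq_top_iff_forall_ge.mpr fun m => ?_
  have hmem : m ∈ {d : ℕ | BLShatteredDepth {f : ℕ → ℕ | ∃ a : ℕ, f = fun _ => a} d} := by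
    refine ⟨fun _ => 0, fun y => ?_⟩
    refine ⟨fun _ => (Finset.univ.sup y) + 1, ⟨_, rfl⟩, fun t => ?_⟩
    have : y t ≤ Finset.univ.sup y := Finset.le_sup (Finset.mem_univ t)
    show Finset.univ.sup y + 1 ≠ y t
    omega
  exact le_iSup₂ (f := fun (d : ℕ) (_ : d ∈ {d : ℕ | BLShatteredDepth
    {f : ℕ → ℕ | ∃ a : ℕ, f = fun _ => a} d}) => (d : ℕ∞)) m hmem


/-- For the class of all constant functions `ℕ → ℕ`:
`L(H) = 1`, `SG(H) = 1`, and `BL(H) = ∞`. -/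
theorem stmt6 :
    Ldim {f : ℕ → ℕ | ∃ a : ℕ, f = fun _ => a} = 1 ∧
    SGdim {f : ℕ → ℕ | ∃ a : ℕ, f = fun _ => a} = 1 ∧
    BLdim {f : ℕ → ℕ | ∃ a : ℕ, f = fun _ => a} = ⊤ := by
  exact ⟨stmt6_L, stmt6_SG, stmt6_BL⟩
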